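/- Let G be a residually finite group and let A be a maximal abelian subgroup of G, i.e., A is commutative and A is not properly contained in any commutative subgroup of G. Then A is separable in G. -/

import Mathlib

/-- A subgroup `H` of a group `G` is separable in `G` if for every `g ∈ G` with `g ∉ H`
there exists a finite-index subgroup `K` of `G` with `H ≤ K` and `g ∉ K`. -/
def SubgroupSeparable {G : Type*} [Group G] (H : Subgroup G) : Prop :=
  ∀ g : G, g ∉ H → ∃ K : Subgroup G, K.FiniteIndex ∧ H ≤ K ∧ g ∉ K

/-- A group `G` is residually finite if every nontrivial element survives in some
finite quotient. -/
def ResiduallyFinite (G : Type*) [Group G] : Prop :=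
  ∀ g : G, g ≠ 1 → ∃ (F : Type) (_ : Group F) (_ : Finite F) (φ : G →* F), φ g ≠ 1

/-- In a residually finite group, every maximal abelian subgroup is separable. -/
theorem maximal_abelian_separable {G : Type*} [Group G] (hG : ResiduallyFinite G)
    (A : Subgroup G) (hcomm : IsMulCommutative A)
    (hmax : ∀ B : Subgroup G, IsMulCommutative B → A ≤ B → B = A) :
    SubgroupSeparable A := by
  intro g hg
  -- Find a ∈ A not commuting with g.
  have hA : ∃ a ∈ A, g * a * g⁻¹ * a⁻¹ ≠ 1 := by
    by_contra h
    push_neg at h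
    have hcg : ∀ a ∈ A, g * a = a * g := by
      intro a ha
      have := h a ha
      rw [mul_inv_eq_one] at this
      rw [mul_inv_eq_iff_eq_mul] at this
      rw [this]
    have hpc : ∀ x ∈ (A : Set G) ∪ {g}, ∀ y ∈ (A : Set G) ∪ {g}, x * y = y * x := by
      rintro x (hx | rfl) y (hy | rfl)
      · exact congrArg Subtype.val (hcomm.is_comm.comm (⟨x, hx⟩ : A) ⟨y, hy⟩)
      · exact (hcg x hx).symm
      · exact hcg y hy
      · rfl
    set B := Subgroup.closure ((A : Set G) ∪ {g}) with hB
    have hBcomm : IsMulCommutative B :=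
      ⟨⟨fun a b => Subtype.ext (congrArg Subtype.val
        ((Subgroup.closureCommGroupOfComm hpc).mul_comm a b))⟩⟩
    have hAB : A ≤ B := fun x hx =>
      Subgroup.subset_closure (Set.mem_union_left _ hx)
    have hgB : g ∈ B := Subgroup.subset_closure (Set.mem_union_right _ rfl)
    rw [hmax B hBcomm hAB] at hgB
    exact hg hgB
  obtain ⟨a, haA, hne⟩ := hA
  obtain ⟨F, _, _, φ, hφ⟩ := hG _ hne
  refine ⟨(Subgroup.centralizer {φ a}).comap φ, ?_, ?_, ?_⟩
  · refine ⟨?_⟩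
    rw [Subgroup.index_comap]
    exact Subgroup.index_ne_zero_of_finite
  · intro x hx
    simp only [Subgroup.mem_comap, Subgroup.mem_centralizer_iff, Set.mem_singleton_iff,
      forall_eq]
    have : a * x = x * a := congrArg Subtype.val (hcomm.is_comm.comm ⟨a, haA⟩ ⟨x, hx⟩)
    rw [← map_mul, this, map_mul]
  · intro hgK
    simp only [Subgroup.mem_comap, Subgroup.mem_centralizer_iff, Set.mem_singleton_iff,
      forall_eq] at hgK
    apply hφ
    simp only [map_mul, map_inv]
    rw [← hgK]
    group
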